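/- The weight sequences M_p = (log(p+e))^{sp}, s > 0, satisfy: there is C > 0 such that for every N ∈ ℤ₊ there is p₀ with m_{Np} ≤ C·m_p for all p ≥ p₀, where m_p = M_{p+1}/M_p. -/

import Mathlib

open Real Set Filter

/-- A weight sequence: positive, log-convex, with `M_p^{1/p} → ∞`. -/
def IsWeightSeq (M : ℕ → ℝ) : Prop :=
  (∀ p, 0 < M p) ∧
  (∀ p : ℕ, 1 ≤ p → (M p) ^ 2 ≤ M (p - 1) * M (p + 1)) ∧
  Filter.Tendsto (fun p : ℕ => (M p) ^ ((1 : ℝ) / p)) Filter.atTop Filter.atTop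

/-- The associated function `ω_M(t) = sup_p log (t^p M₀ / M_p)`. -/
noncomputable def assocFun (M : ℕ → ℝ) (t : ℝ) : ℝ :=
  ⨆ p : ℕ, Real.log (t ^ p * M 0 / M p)

/-- The quotient sequence `m_p = M_{p+1}/M_p`. -/
noncomputable def mseq (M : ℕ → ℝ) (p : ℕ) : ℝ := M (p + 1) / M p

/-- The counting function `m(x) = #{p ≥ 1 : m_p ≤ x}` of the sequence `(m_p)`. -/
noncomputable def cntFun (M : ℕ → ℝ) (x : ℝ) : ℝ :=
  (Nat.card {p : ℕ // 1 ≤ p ∧ mseq M p ≤ x} : ℝ)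

/-- The weight sequence `M_p = (log(p+e))^{sp}` for `s > 0`. -/
noncomputable def logSeq (s : ℝ) (p : ℕ) : ℝ :=
  (Real.log ((p : ℝ) + Real.exp 1)) ^ (s * p)

private lemma one_le_L {x : ℝ} (hx : 0 ≤ x) : 1 ≤ Real.log (x + Real.exp 1) := by
  rw [Real.le_log_iff_exp_le (by positivity)]
  linarith

private lemma L_pos {x : ℝ} (hx : 0 ≤ x) : 0 < Real.log (x + Real.exp 1) :=
  lt_of_lt_of_le one_pos (one_le_L hx)

private lemma log_sub_log_le {u v : ℝ} (hu : 1 ≤ u) (huv : u ≤ v) :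
    Real.log v - Real.log u ≤ v - u := by
  have hu0 : 0 < u := lt_of_lt_of_le one_pos hu
  have hv0 : 0 < v := lt_of_lt_of_le hu0 huv
  rw [← Real.log_div hv0.ne' hu0.ne']
  have h2 : Real.log (v / u) ≤ v / u - 1 := Real.log_le_sub_one_of_pos (div_pos hv0 hu0)
  have h3 : v / u - 1 ≤ v - u := by
    rw [div_sub_one hu0.ne']
    calc (v - u) / u ≤ (v - u) / 1 := by
          apply div_le_div_of_nonneg_left (by linarith) one_pos hu
    _ = v - u := by ring
  linarith

-- key bound 1
private lemma key1 {q : ℝ} (hq : 0 ≤ q) :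
    (q + 1) * (Real.log (Real.log (q + 1 + Real.exp 1)) -
      Real.log (Real.log (q + Real.exp 1))) ≤ 1 := by
  have he : 1 ≤ Real.exp 1 := by
    have := Real.add_one_le_exp 1; linarith
  have hu : 1 ≤ Real.log (q + Real.exp 1) := one_le_L hq
  have huv : Real.log (q + Real.exp 1) ≤ Real.log (q + 1 + Real.exp 1) :=
    Real.log_le_log (by positivity) (by linarith)
  have h1 : Real.log (Real.log (q + 1 + Real.exp 1)) - Real.log (Real.log (q + Real.exp 1))
      ≤ Real.log (q + 1 + Real.exp 1) - Real.log (q + Real.exp 1) :=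
    log_sub_log_le hu huv
  have h2 : Real.log (q + 1 + Real.exp 1) - Real.log (q + Real.exp 1) ≤ 1 / (q + Real.exp 1) := by
    have h0 : (0:ℝ) < q + Real.exp 1 := by positivity
    have h0' : (0:ℝ) < q + 1 + Real.exp 1 := by positivity
    rw [← Real.log_div h0'.ne' h0.ne']
    have := Real.log_le_sub_one_of_pos (div_pos h0' h0)
    have heq : (q + 1 + Real.exp 1) / (q + Real.exp 1) - 1 = 1 / (q + Real.exp 1) := by
      field_simp
      ring
    linarith
  have h3 : (q + 1) * (1 / (q + Real.exp 1)) ≤ 1 := by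
    rw [mul_one_div, div_le_one (by positivity)]
    linarith
  have hnn : 0 ≤ q + 1 := by linarith
  nlinarith [mul_le_mul_of_nonneg_left h1 hnn, mul_le_mul_of_nonneg_left h2 hnn]

-- key bound 2
private lemma key2 {N p : ℕ} (hNp : N ≤ p) :
    Real.log (Real.log ((N:ℝ) * (p:ℝ) + Real.exp 1)) ≤
      1 + Real.log (Real.log ((p:ℝ) + 1 + Real.exp 1)) := by
  have he : 1 ≤ Real.exp 1 := by have := Real.add_one_le_exp 1; linarith
  have hp0 : (0:ℝ) ≤ p := Nat.cast_nonneg p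
  have hq0 : (0:ℝ) ≤ (N:ℝ) * p := by positivity
  have hNp' : (N:ℝ) ≤ p := Nat.cast_le.mpr hNp
  have hsq : (N:ℝ) * p + Real.exp 1 ≤ ((p:ℝ) + Real.exp 1) ^ 2 := by nlinarith
  have h1 : Real.log ((N:ℝ) * p + Real.exp 1) ≤ 2 * Real.log ((p:ℝ) + Real.exp 1) := by
    calc Real.log ((N:ℝ) * p + Real.exp 1) ≤ Real.log (((p:ℝ) + Real.exp 1) ^ 2) :=
          Real.log_le_log (by positivity) hsq
    _ = 2 * Real.log ((p:ℝ) + Real.exp 1) := by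
          rw [Real.log_pow]; push_cast; ring
  have h2 : Real.log (Real.log ((N:ℝ) * p + Real.exp 1)) ≤
      Real.log (2 * Real.log ((p:ℝ) + Real.exp 1)) :=
    Real.log_le_log (L_pos hq0) h1
  have hlog2 : Real.log 2 ≤ 1 := by
    have := Real.log_le_sub_one_of_pos (by norm_num : (0:ℝ) < 2); linarith
  have h3 : Real.log (2 * Real.log ((p:ℝ) + Real.exp 1)) =
      Real.log 2 + Real.log (Real.log ((p:ℝ) + Real.exp 1)) :=
    Real.log_mul (by norm_num) (L_pos hp0).ne'
  have h4 : Real.log (Real.log ((p:ℝ) + Real.exp 1)) ≤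
      Real.log (Real.log ((p:ℝ) + 1 + Real.exp 1)) :=
    Real.log_le_log (L_pos hp0) (Real.log_le_log (by positivity) (by linarith))
  linarith

/-- The sequences `M_p = (log(p+e))^{sp}`, `s > 0`, satisfy condition (Ω-seq):
there is `C > 0` such that for every `N ∈ ℤ₊` there is `p₀` with
`m_{Np} ≤ C m_p` for all `p ≥ p₀`. -/
theorem logSeq_satisfies_omegaSeq (s : ℝ) (hs : 0 < s) :
    ∃ C > (0:ℝ), ∀ N : ℕ, 1 ≤ N → ∃ p₀ : ℕ, 1 ≤ p₀ ∧
      ∀ p ≥ p₀, mseq (logSeq s) (N * p) ≤ C * mseq (logSeq s) p := by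
  refine ⟨Real.exp (2 * s), Real.exp_pos _, fun N hN => ⟨max N 1, le_max_right _ _, ?_⟩⟩
  intro p hp
  have hNp : N ≤ p := le_trans (le_max_left _ _) hp
  have he : 1 ≤ Real.exp 1 := by have := Real.add_one_le_exp 1; linarith
  -- positivity of everything
  have hLq : 0 < Real.log ((N:ℝ) * p + Real.exp 1) := L_pos (by positivity)
  have hLq1 : 0 < Real.log ((N:ℝ) * p + 1 + Real.exp 1) := L_pos (by positivity)
  have hLp : 0 < Real.log ((p:ℝ) + Real.exp 1) := L_pos (Nat.cast_nonneg p)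
  have hLp1 : 0 < Real.log ((p:ℝ) + 1 + Real.exp 1) := L_pos (by positivity)
  have hMq : (0:ℝ) < logSeq s (N * p) := by
    unfold logSeq; push_cast; exact Real.rpow_pos_of_pos hLq _
  have hMq1 : (0:ℝ) < logSeq s (N * p + 1) := by
    unfold logSeq; push_cast; exact Real.rpow_pos_of_pos hLq1 _
  have hMp : (0:ℝ) < logSeq s p := Real.rpow_pos_of_pos hLp _
  have hMp1 : (0:ℝ) < logSeq s (p + 1) := by
    unfold logSeq; push_cast; exact Real.rpow_pos_of_pos hLp1 _
  have hmq : 0 < mseq (logSeq s) (N * p) := div_pos hMq1 hMq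
  have hmp : 0 < mseq (logSeq s) p := div_pos hMp1 hMp
  -- log formulas
  have hlogq : Real.log (mseq (logSeq s) (N * p)) =
      s * ((N:ℝ) * p + 1) * Real.log (Real.log ((N:ℝ) * p + 1 + Real.exp 1)) -
      s * ((N:ℝ) * p) * Real.log (Real.log ((N:ℝ) * p + Real.exp 1)) := by
    unfold mseq logSeq
    rw [Real.log_div (Real.rpow_pos_of_pos (by push_cast at hLq1 ⊢; exact hLq1) _).ne'
        (Real.rpow_pos_of_pos (by push_cast at hLq ⊢; exact hLq) _).ne',
      Real.log_rpow (by push_cast at hLq1 ⊢; exact hLq1),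
      Real.log_rpow (by push_cast at hLq ⊢; exact hLq)]
    push_cast; ring
  have hlogp : Real.log (mseq (logSeq s) p) =
      s * ((p:ℝ) + 1) * Real.log (Real.log ((p:ℝ) + 1 + Real.exp 1)) -
      s * (p:ℝ) * Real.log (Real.log ((p:ℝ) + Real.exp 1)) := by
    unfold mseq logSeq
    rw [Real.log_div (Real.rpow_pos_of_pos (by push_cast at hLp1 ⊢; exact hLp1) _).ne'
        (Real.rpow_pos_of_pos hLp _).ne',
      Real.log_rpow (by push_cast at hLp1 ⊢; exact hLp1),
      Real.log_rpow hLp]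
    push_cast; ring
  -- main inequality on logs
  have hk1 := key1 (q := (N:ℝ) * p) (by positivity)
  have hk2 := key2 hNp
  have hk3 : Real.log (Real.log ((p:ℝ) + Real.exp 1)) ≤
      Real.log (Real.log ((p:ℝ) + 1 + Real.exp 1)) :=
    Real.log_le_log hLp (Real.log_le_log (by positivity) (by linarith))
  have hmain : Real.log (mseq (logSeq s) (N * p)) ≤ 2 * s + Real.log (mseq (logSeq s) p) := by
    rw [hlogq, hlogp]
    have hp0 : (0:ℝ) ≤ p := Nat.cast_nonneg p
    nlinarith [mul_le_mul_of_nonneg_left hk1 hs.le, mul_le_mul_of_nonneg_left hk2 hs.le,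
      mul_le_mul_of_nonneg_left hk3 (mul_nonneg hs.le hp0)]
  calc mseq (logSeq s) (N * p) = Real.exp (Real.log (mseq (logSeq s) (N * p))) :=
        (Real.exp_log hmq).symm
  _ ≤ Real.exp (2 * s + Real.log (mseq (logSeq s) p)) := Real.exp_le_exp.mpr hmain
  _ = Real.exp (2 * s) * mseq (logSeq s) p := by rw [Real.exp_add, Real.exp_log hmp]
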